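/- For every odd natural number m ≥ 1, the smoothing-rate function η₀(m) = 2^{−m}·binom(m, ⌊(m+1)/2⌋) satisfies 2^{−m}·binom(m, (m+1)/2) ≤ √(2/(π·(m+1))). -/
import Mathlib

open Real Filter Nat Topology

lemma sqrt_pi_le_stirlingSeq (n : ℕ) (hn : 1 ≤ n) : Real.sqrt π ≤ Stirling.stirlingSeq n := by
  obtain ⟨k, rfl⟩ := Nat.exists_eq_add_of_le hn
  have h := Stirling.stirlingSeq'_antitone
  have ht : Tendsto (Stirling.stirlingSeq ∘ Nat.succ) atTop (𝓝 (Real.sqrt π)) :=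
    Stirling.tendsto_stirlingSeq_sqrt_pi.comp (tendsto_add_atTop_nat 1)
  simpa [Nat.add_comm] using h.le_of_tendsto ht k

lemma factorial_eq (n : ℕ) (hn : 1 ≤ n) :
    (n ! : ℝ) = Stirling.stirlingSeq n * (Real.sqrt (2 * n) * ((n : ℝ) / Real.exp 1) ^ n) := by
  have h1 : (0:ℝ) < Real.sqrt (2 * n) * ((n : ℝ) / Real.exp 1) ^ n := by
    have : (0:ℝ) < n := by exact_mod_cast hn
    positivity
  rw [Stirling.stirlingSeq, div_mul_cancel₀]
  exact h1.ne'

lemma central_bound (n : ℕ) (hn : 1 ≤ n) :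
    (Nat.centralBinom n : ℝ) / 4 ^ n ≤ 1 / Real.sqrt (π * n) := by
  have hn0 : (0:ℝ) < n := by exact_mod_cast hn
  have hs : Real.sqrt π ≤ Stirling.stirlingSeq n := sqrt_pi_le_stirlingSeq n hn
  have hpi : (0:ℝ) < Real.sqrt π := Real.sqrt_pos.mpr Real.pi_pos
  have hspos : 0 < Stirling.stirlingSeq n := lt_of_lt_of_le hpi hs
  have h2npos : 0 < Stirling.stirlingSeq (2 * n) :=
    lt_of_lt_of_le hpi (sqrt_pi_le_stirlingSeq _ (by omega))
  have hanti : Stirling.stirlingSeq (2 * n) ≤ Stirling.stirlingSeq n := by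
    obtain ⟨k, rfl⟩ := Nat.exists_eq_add_of_le' hn
    have := Stirling.stirlingSeq'_antitone (show k ≤ k + 1 + k by omega)
    simpa [Nat.succ_eq_add_one, two_mul, Nat.add_assoc, Nat.add_comm, Nat.add_left_comm] using this
  have hsn : (0:ℝ) < Real.sqrt n := Real.sqrt_pos.mpr hn0
  have hnn : Real.sqrt n * Real.sqrt n = n := Real.mul_self_sqrt hn0.le
  have h22 : Real.sqrt 2 * Real.sqrt 2 = 2 := Real.mul_self_sqrt (by norm_num)
  have key : (Nat.centralBinom n : ℝ) / 4 ^ n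
      = Stirling.stirlingSeq (2 * n) * Real.sqrt n / (Stirling.stirlingSeq n ^ 2 * n) := by
    have hcb : (Nat.centralBinom n : ℝ) * (n ! * n !) = (2 * n)! := by
      have := Nat.choose_mul_factorial_mul_factorial (show n ≤ 2 * n by omega)
      have h2 : 2 * n - n = n := by omega
      rw [h2] at this
      exact_mod_cast by rw [← this, Nat.centralBinom]; push_cast; ring
    have e1 := factorial_eq n hn
    have e2 := factorial_eq (2 * n) (by omega)
    have hsq : Real.sqrt (2 * ((2 * n : ℕ) : ℝ)) = 2 * Real.sqrt n := by
      push_cast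
      rw [show (2 : ℝ) * (2 * n) = 2 ^ 2 * n by ring, Real.sqrt_mul (by positivity),
        Real.sqrt_sq (by norm_num)]
    have hpow : ((2 * n : ℕ) : ℝ) / Real.exp 1 = 2 * ((n:ℝ) / Real.exp 1) := by
      push_cast; ring
    rw [e1, e2, hsq, hpow] at hcb
    have h4 : ((2:ℝ) * ((n:ℝ) / Real.exp 1)) ^ (2 * n)
        = 4 ^ n * (((n:ℝ) / Real.exp 1) ^ n) ^ 2 := by
      rw [mul_pow, show (2:ℝ) ^ (2 * n) = 4 ^ n by rw [pow_mul]; norm_num,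
        show ((n:ℝ) / Real.exp 1) ^ (2 * n) = (((n:ℝ) / Real.exp 1) ^ n) ^ 2 by
          rw [mul_comm 2 n, pow_mul]]
    rw [h4] at hcb
    have hsq2 : Real.sqrt (2 * (n:ℝ)) = Real.sqrt 2 * Real.sqrt n := by
      rw [Real.sqrt_mul (by norm_num)]
    rw [hsq2] at hcb
    rw [div_eq_div_iff (by positivity) (by positivity)]
    have hY : (0:ℝ) < ((n:ℝ) / Real.exp 1) ^ n := by positivity
    refine mul_right_cancel₀ (b := 2 * (((n:ℝ) / Real.exp 1) ^ n) ^ 2) (by positivity) ?_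
    linear_combination hcb
      - ((Nat.centralBinom n : ℝ) * Stirling.stirlingSeq n ^ 2
          * (((n:ℝ) / Real.exp 1) ^ n) ^ 2 * (Real.sqrt n * Real.sqrt n)) * h22
      - (2 * (Nat.centralBinom n : ℝ) * Stirling.stirlingSeq n ^ 2
          * (((n:ℝ) / Real.exp 1) ^ n) ^ 2) * hnn
  rw [key, Real.sqrt_mul Real.pi_pos.le,
    div_le_div_iff₀ (by positivity) (by positivity)]
  have hEq : Stirling.stirlingSeq (2 * n) * Real.sqrt n * (Real.sqrt π * Real.sqrt n)
      = Stirling.stirlingSeq (2 * n) * Real.sqrt π * (n:ℝ) := by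
    linear_combination (Stirling.stirlingSeq (2 * n) * Real.sqrt π) * hnn
  rw [hEq, one_mul]
  have : Stirling.stirlingSeq (2 * n) * Real.sqrt π ≤ Stirling.stirlingSeq n ^ 2 := by
    nlinarith [hanti, hs, hpi, h2npos]
  nlinarith [this, hn0]

theorem stmt11 (m : ℕ) (hm : 1 ≤ m) (hmo : Odd m) :
    (m.choose ((m + 1) / 2) : ℝ) / 2 ^ m ≤ Real.sqrt (2 / (Real.pi * (m + 1))) := by
  obtain ⟨k, rfl⟩ := hmo
  have hdiv : (2 * k + 1 + 1) / 2 = k + 1 := by omega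
  rw [hdiv]
  have hcc : Nat.centralBinom (k + 1) = 2 * Nat.choose (2 * k + 1) (k + 1) := by
    rw [Nat.centralBinom, show 2 * (k + 1) = (2 * k + 1) + 1 by ring, Nat.choose_succ_succ]
    have := Nat.choose_symm (show k + 1 ≤ 2 * k + 1 by omega)
    rw [show 2 * k + 1 - (k + 1) = k by omega] at this
    simp only [Nat.succ_eq_add_one] at *
    omega
  have hb := central_bound (k + 1) (by omega)
  have hL : ((2 * k + 1).choose (k + 1) : ℝ) / 2 ^ (2 * k + 1)
      = (Nat.centralBinom (k + 1) : ℝ) / 4 ^ (k + 1) := by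
    have h4 : (4:ℝ) ^ (k + 1) = 2 * 2 ^ (2 * k + 1) := by
      rw [show (4:ℝ) = 2 ^ 2 by norm_num, ← pow_mul, show 2 * (k + 1) = (2 * k + 1) + 1 by ring,
        pow_succ]
      ring
    rw [hcc, h4]
    push_cast
    rw [mul_div_mul_left _ _ (two_ne_zero)]
  have hR : Real.sqrt (2 / (π * (((2 * k + 1 : ℕ) : ℝ) + 1))) = 1 / Real.sqrt (π * ((k + 1 : ℕ) : ℝ)) := by
    have hRe : (2:ℝ) / (π * (((2 * k + 1 : ℕ) : ℝ) + 1)) = 1 / (π * ((k + 1 : ℕ) : ℝ)) := by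
      push_cast
      rw [div_eq_div_iff (by positivity) (by positivity)]
      ring
    rw [hRe, one_div, Real.sqrt_inv, ← one_div]
  rw [hR, hL]
  exact hb
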